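/- arXiv:2308.06141 — 4 statements merged into one kernel-verified Lean document; each statement's English description precedes it below -/
import Mathlib

section
/- Let k, p be natural numbers with p ≥ 1, let M₁ be a real k×p matrix of full column rank (rank M₁ = p), let M₂ be a real p×p matrix, and let L be the (k+p)×(k+p) block matrix L = fromBlocks 0 M₁ 0 M₂. Then for every natural number l ≥ 1: M₂ is nilpotent of index l (i.e., M₂^l = 0 and M₂^(l-1) ≠ 0) if and only if L is nilpotent of index l+1 (i.e., L^(l+1) = 0 and L^l ≠ 0). -/
open Matrix

lemma pow_block (k p : ℕ) (M₁ : Matrix (Fin k) (Fin p) ℝ) (M₂ : Matrix (Fin p) (Fin p) ℝ)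
    (n : ℕ) (hn : 1 ≤ n) :
    (fromBlocks 0 M₁ 0 M₂ : Matrix (Fin k ⊕ Fin p) (Fin k ⊕ Fin p) ℝ) ^ n
      = fromBlocks 0 (M₁ * M₂ ^ (n - 1)) 0 (M₂ ^ n) := by
  induction n with
  | zero => omega
  | succ m ih =>
    rcases Nat.eq_or_lt_of_le hn with h | h
    · simp [← h]
    · have hm : 1 ≤ m := by omega
      rw [pow_succ, ih hm, fromBlocks_multiply]
      have : m - 1 + 1 = m := by omega
      simp only [Matrix.zero_mul, Matrix.mul_zero, add_zero, zero_add, fromBlocks_inj]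
      rw [Matrix.mul_assoc, ← pow_succ, this]
      simp [pow_succ]

/-- Nilpotency equivalence (Lemma 3.1 of the paper): for `M₁` of full column
rank and `L = fromBlocks 0 M₁ 0 M₂`, the matrix `M₂` is nilpotent of index `l`
if and only if `L` is nilpotent of index `l + 1`. -/
theorem nilpotency_equivalence (k p : ℕ) (hp : 1 ≤ p)
    (M₁ : Matrix (Fin k) (Fin p) ℝ) (hM₁ : M₁.rank = p)
    (M₂ : Matrix (Fin p) (Fin p) ℝ)
    (L : Matrix (Fin k ⊕ Fin p) (Fin k ⊕ Fin p) ℝ)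
    (hL : L = Matrix.fromBlocks 0 M₁ 0 M₂)
    (l : ℕ) (hl : 1 ≤ l) :
    (M₂ ^ l = 0 ∧ M₂ ^ (l - 1) ≠ 0) ↔ (L ^ (l + 1) = 0 ∧ L ^ l ≠ 0) := by
  -- M₁ has injective mulVec
  have hker : LinearMap.ker M₁.mulVecLin = ⊥ := by
    have h1 := LinearMap.finrank_range_add_finrank_ker M₁.mulVecLin
    rw [show Module.finrank ℝ (Fin p → ℝ) = p by simp] at h1
    have h2 : M₁.rank = Module.finrank ℝ (LinearMap.range M₁.mulVecLin) := rfl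
    have hk0 : Module.finrank ℝ (LinearMap.ker M₁.mulVecLin) = 0 := by omega
    exact Submodule.finrank_eq_zero.mp hk0
  have hinj : ∀ X : Matrix (Fin p) (Fin p) ℝ, M₁ * X = 0 → X = 0 := by
    intro X hX
    ext i j
    have : M₁.mulVec (fun r => X r j) = 0 := by
      ext a
      have := congrFun (congrFun hX a) j
      simpa [Matrix.mul_apply, Matrix.mulVec, dotProduct] using this
    have := (LinearMap.ker_eq_bot.mp hker) (a₂ := 0) (by simpa using this)
    exact congrFun this i
  subst hL
  rw [pow_block k p M₁ M₂ (l+1) (by omega), pow_block k p M₁ M₂ l hl]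
  simp only [Nat.add_sub_cancel]
  constructor
  · rintro ⟨h1, h2⟩
    constructor
    · rw [← Matrix.fromBlocks_zero]
      rw [fromBlocks_inj]
      refine ⟨rfl, by rw [h1, Matrix.mul_zero], rfl, by simp [pow_succ, h1]⟩
    · intro hc
      rw [← Matrix.fromBlocks_zero, fromBlocks_inj] at hc
      exact h2 (hinj _ hc.2.1)
  · rintro ⟨h1, h2⟩
    rw [← Matrix.fromBlocks_zero, fromBlocks_inj] at h1
    have hMl : M₂ ^ l = 0 := hinj _ h1.2.1
    refine ⟨hMl, fun hc => h2 ?_⟩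
    rw [← Matrix.fromBlocks_zero, fromBlocks_inj]
    exact ⟨rfl, by rw [hc, Matrix.mul_zero], rfl, hMl⟩
end

section
/- Let n, p be natural numbers with p ≥ 1, and let N : ℝⁿ → (n×p real matrices), f : ℝⁿ → ℝᵖ and G : ℝⁿ × ℝ → ℝⁿ all be C¹. Define H : ℝⁿ × ℝ → ℝⁿ by H(z,ε) = z + N(z)·f(z) + ε·G(z,ε), and let z₀ ∈ ℝⁿ satisfy f(z₀) = 0. Then the following are equivalent: (i) det(I_p + Df(z₀)·N(z₀)) ≠ 0, where Df(z₀) is the p×n Jacobian matrix of f at z₀ (equivalently, all p nontrivial multipliers, i.e. the eigenvalues of I_p + Df(z₀)·N(z₀), are nonzero); (ii) there exist an open neighbourhood U of z₀ in ℝⁿ and ε₀ > 0 such that for every ε ∈ [0, ε₀), the map z ↦ H(z,ε) restricted to U is a C¹ diffeomorphism onto an open subset of ℝⁿ (it is injective on U, its image is open, and its inverse is C¹ on the image). -/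
open scoped Topology

/-- A continuous linear endomorphism of a finite-dimensional real space with nonzero
determinant comes from a continuous linear equivalence. -/
lemma clm_equiv_of_det_ne_zero {P : Type*} [NormedAddCommGroup P] [NormedSpace ℝ P]
    [FiniteDimensional ℝ P] (u : P →L[ℝ] P)
    (h : LinearMap.det (u : P →ₗ[ℝ] P) ≠ 0) :
    ∃ e : P ≃L[ℝ] P, (e : P →L[ℝ] P) = u := by
  refine ⟨(LinearMap.equivOfDetNeZero (u : P →ₗ[ℝ] P) h).toContinuousLinearEquiv, ?_⟩
  ext x
  have : ((LinearMap.equivOfDetNeZero (u : P →ₗ[ℝ] P) h : P →ₗ[ℝ] P)) = (u : P →ₗ[ℝ] P) :=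
    LinearEquiv.coe_ofIsUnitDet _
  calc ((LinearMap.equivOfDetNeZero (u : P →ₗ[ℝ] P) h).toContinuousLinearEquiv :
      P →L[ℝ] P) x = (LinearMap.equivOfDetNeZero (u : P →ₗ[ℝ] P) h) x := rfl
    _ = ((LinearMap.equivOfDetNeZero (u : P →ₗ[ℝ] P) h : P →ₗ[ℝ] P)) x := rfl
    _ = u x := by rw [this]; rfl

/-- Derivative of the fast map `z ↦ z + N(z)·f(z)` at a point of the critical manifold. -/
lemma hasFDerivAt_fast_part (n p : ℕ)
    (N : (Fin n → ℝ) → Matrix (Fin n) (Fin p) ℝ)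
    (f : (Fin n → ℝ) → (Fin p → ℝ))
    (hN : ∀ i j, ContDiff ℝ 1 (fun z => N z i j))
    (hf : ContDiff ℝ 1 f)
    (z₀ : Fin n → ℝ) (hz₀ : f z₀ = 0)
    (Df : Matrix (Fin p) (Fin n) ℝ)
    (hDf : ∀ i j, Df i j = fderiv ℝ f z₀ (Pi.single j 1) i) :
    HasFDerivAt (fun z => z + (N z).mulVec (f z))
      (LinearMap.toContinuousLinearMap
        (Matrix.mulVecLin ((1 : Matrix (Fin n) (Fin n) ℝ) + N z₀ * Df))) z₀ := by
  have hDf' : HasFDerivAt f (fderiv ℝ f z₀) z₀ := (hf.differentiable one_ne_zero z₀).hasFDerivAt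
  have hDfv : ∀ (v : Fin n → ℝ) (j : Fin p), fderiv ℝ f z₀ v j = ∑ k, Df j k * v k := by
    intro v j
    have hv : (∑ k, v k • (Pi.single k 1 : Fin n → ℝ)) = v := by
      funext m
      simp [Pi.single_apply]
    conv_lhs => rw [← hv]
    rw [map_sum]
    simp only [map_smul]
    rw [Finset.sum_apply]
    refine Finset.sum_congr rfl fun k _ => ?_
    rw [Pi.smul_apply, hDf j k, smul_eq_mul, mul_comm]
  apply hasFDerivAt_pi''
  intro i
  have hcomp : (fun z : Fin n → ℝ => (z + (N z).mulVec (f z)) i)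
      = fun z => z i + ∑ j, N z i j * f z j := by
    funext z; simp [Matrix.mulVec, dotProduct]
  have hterm : ∀ j : Fin p, HasFDerivAt (fun z => N z i j * f z j)
      ((N z₀ i j) • ((ContinuousLinearMap.proj j).comp (fderiv ℝ f z₀))) z₀ := by
    intro j
    have h1 : HasFDerivAt (fun z => N z i j) (fderiv ℝ (fun z => N z i j) z₀) z₀ :=
      (((hN i j).differentiable one_ne_zero) z₀).hasFDerivAt
    have h2 : HasFDerivAt (fun z => f z j)
        ((ContinuousLinearMap.proj j).comp (fderiv ℝ f z₀)) z₀ :=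
      hasFDerivAt_pi'.1 hDf' j
    have h3 := h1.mul h2
    have h4 : f z₀ j = 0 := by rw [hz₀]; rfl
    rw [h4, zero_smul, add_zero] at h3
    exact h3
  have hsum := HasFDerivAt.sum (u := Finset.univ) (A' := fun j =>
      (N z₀ i j) • ((ContinuousLinearMap.proj j).comp (fderiv ℝ f z₀)))
      (fun j _ => hterm j)
  have hmain := (hasFDerivAt_apply i z₀).add hsum
  rw [hcomp]
  convert hmain using 1
  · funext v; simp only [Pi.add_apply, Finset.sum_apply]
  ext v
  simp only [ContinuousLinearMap.coe_comp', Function.comp_apply,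
    LinearMap.coe_toContinuousLinearMap', Matrix.mulVecLin_apply,
    ContinuousLinearMap.proj_apply, ContinuousLinearMap.add_apply,
    ContinuousLinearMap.coe_sum', Finset.sum_apply, ContinuousLinearMap.coe_smul',
    Pi.smul_apply, smul_eq_mul]
  rw [Matrix.add_mulVec, Pi.add_apply]
  congr 1
  · simp [Matrix.one_mulVec]
  · simp only [hDfv]
    simp only [Matrix.mulVec, dotProduct, Matrix.mul_apply, Finset.sum_mul,
      Finset.mul_sum, mul_assoc]
    rw [Finset.sum_comm]

/-- Invertibility proposition for fast-slow maps: the map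
`H(z,ε) = z + N(z)·f(z) + ε·G(z,ε)` restricted to a neighbourhood of a point
`z₀` of the critical manifold `{f = 0}` is a `C¹` diffeomorphism onto an open
set, uniformly for all sufficiently small `ε ≥ 0`, if and only if
`det (I_p + Df(z₀)·N(z₀)) ≠ 0`, i.e. no nontrivial multiplier vanishes.
(Smoothness of the matrix-valued map `N` is expressed entrywise.) -/
theorem fast_slow_map_local_diffeo_iff (n p : ℕ) (hp : 1 ≤ p)
    (N : (Fin n → ℝ) → Matrix (Fin n) (Fin p) ℝ)
    (f : (Fin n → ℝ) → (Fin p → ℝ))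
    (G : (Fin n → ℝ) × ℝ → (Fin n → ℝ))
    (hN : ∀ i j, ContDiff ℝ 1 (fun z => N z i j))
    (hf : ContDiff ℝ 1 f) (hG : ContDiff ℝ 1 G)
    (H : (Fin n → ℝ) × ℝ → (Fin n → ℝ))
    (hH : ∀ z ε, H (z, ε) = z + (N z).mulVec (f z) + ε • G (z, ε))
    (z₀ : Fin n → ℝ) (hz₀ : f z₀ = 0)
    (Df : Matrix (Fin p) (Fin n) ℝ)
    (hDf : ∀ i j, Df i j = fderiv ℝ f z₀ (Pi.single j 1) i) :
    ((1 : Matrix (Fin p) (Fin p) ℝ) + Df * N z₀).det ≠ 0 ↔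
      ∃ U : Set (Fin n → ℝ), IsOpen U ∧ z₀ ∈ U ∧
        ∃ ε₀ > (0 : ℝ), ∀ ε ∈ Set.Ico (0 : ℝ) ε₀,
          Set.InjOn (fun z => H (z, ε)) U ∧
          IsOpen ((fun z => H (z, ε)) '' U) ∧
          ContDiffOn ℝ 1 (fun z => H (z, ε)) U ∧
          ∃ Hinv : (Fin n → ℝ) → (Fin n → ℝ),
            ContDiffOn ℝ 1 Hinv ((fun z => H (z, ε)) '' U) ∧
            ∀ z ∈ U, Hinv (H (z, ε)) = z := by
  classical
  set M : Matrix (Fin n) (Fin n) ℝ := 1 + N z₀ * Df with hMdef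
  set L : (Fin n → ℝ) →L[ℝ] (Fin n → ℝ) :=
    LinearMap.toContinuousLinearMap (Matrix.mulVecLin M) with hLdef
  have hL : HasFDerivAt (fun z => z + (N z).mulVec (f z)) L z₀ :=
    hasFDerivAt_fast_part n p N f hN hf z₀ hz₀ Df hDf
  have hdetL : LinearMap.det (L : (Fin n → ℝ) →ₗ[ℝ] (Fin n → ℝ))
      = ((1 : Matrix (Fin p) (Fin p) ℝ) + Df * N z₀).det := by
    rw [hLdef, LinearMap.coe_toContinuousLinearMap, ← Matrix.toLin'_apply',
      LinearMap.det_toLin', hMdef]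
    exact Matrix.det_one_add_mul_comm (N z₀) Df
  have hHfun : H = fun w => (w.1 + (N w.1).mulVec (f w.1)) + w.2 • G w := by
    funext w
    exact hH w.1 w.2
  have hfast : ContDiff ℝ 1 (fun z : Fin n → ℝ => z + (N z).mulVec (f z)) := by
    apply contDiff_pi.2
    intro i
    have hc : (fun z : Fin n → ℝ => (z + (N z).mulVec (f z)) i)
        = fun z => z i + ∑ j, N z i j * f z j := by
      funext z; simp [Matrix.mulVec, dotProduct]
    rw [hc]
    exact (contDiff_pi.1 contDiff_id i).add
      (ContDiff.sum fun j _ => (hN i j).mul (contDiff_pi.1 hf j))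
  have hHc : ContDiff ℝ 1 H := by
    rw [hHfun]
    exact (hfast.comp contDiff_fst).add (contDiff_snd.smul hG)
  set Φ : (Fin n → ℝ) × ℝ → (Fin n → ℝ) × ℝ := fun w => (H w, w.2) with hΦdef
  have hΦc : ContDiff ℝ 1 Φ := hHc.prodMk contDiff_snd
  set g₀ : Fin n → ℝ := G (z₀, 0) with hg₀def
  set T : ((Fin n → ℝ) × ℝ) →L[ℝ] ((Fin n → ℝ) × ℝ) :=
    (L.comp (ContinuousLinearMap.fst ℝ (Fin n → ℝ) ℝ) +
      (ContinuousLinearMap.snd ℝ (Fin n → ℝ) ℝ).smulRight g₀).prod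
      (ContinuousLinearMap.snd ℝ (Fin n → ℝ) ℝ) with hTdef
  have hHT : HasFDerivAt H (L.comp (ContinuousLinearMap.fst ℝ (Fin n → ℝ) ℝ) +
      (ContinuousLinearMap.snd ℝ (Fin n → ℝ) ℝ).smulRight g₀) (z₀, 0) := by
    rw [hHfun]
    have h1 : HasFDerivAt (fun w : (Fin n → ℝ) × ℝ => w.1 + (N w.1).mulVec (f w.1))
        (L.comp (ContinuousLinearMap.fst ℝ (Fin n → ℝ) ℝ)) (z₀, 0) :=
      HasFDerivAt.comp ((z₀, 0) : (Fin n → ℝ) × ℝ) (f := Prod.fst) hL hasFDerivAt_fst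
    have h2 := (hasFDerivAt_snd (p := ((z₀, 0) : (Fin n → ℝ) × ℝ))).smul
      ((hG.differentiable one_ne_zero (z₀, 0)).hasFDerivAt)
    rw [show ((z₀, (0:ℝ)) : (Fin n → ℝ) × ℝ).2 = (0:ℝ) from rfl, zero_smul, zero_add] at h2
    exact h1.add h2
  have hΦT : HasFDerivAt Φ T (z₀, 0) := hHT.prodMk hasFDerivAt_snd
  constructor
  · -- forward direction
    intro hdet
    have hdetM : LinearMap.det (L : (Fin n → ℝ) →ₗ[ℝ] (Fin n → ℝ)) ≠ 0 := by
      rw [hdetL]; exact hdet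
    obtain ⟨Le, hLe⟩ := clm_equiv_of_det_ne_zero L hdetM
    have hLbij : Function.Bijective L := by
      rw [← hLe]; exact Le.bijective
    have hTbij : Function.Bijective T := by
      constructor
      · intro w w' hww
        have hww' : ((L w.1 + w.2 • g₀, w.2) : (Fin n → ℝ) × ℝ)
            = (L w'.1 + w'.2 • g₀, w'.2) := hww
        have h2 : w.2 = w'.2 := (Prod.ext_iff.1 hww').2
        have h1 : L w.1 + w.2 • g₀ = L w'.1 + w'.2 • g₀ := (Prod.ext_iff.1 hww').1
        rw [h2] at h1
        have h3 : L w.1 = L w'.1 := by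
          have := add_right_cancel h1; exact this
        exact Prod.ext (hLbij.1 h3) h2
      · rintro ⟨y, s⟩
        obtain ⟨v, hv⟩ := hLbij.2 (y - s • g₀)
        refine ⟨(v, s), ?_⟩
        show (L v + s • g₀, s) = (y, s)
        rw [hv]; simp
    obtain ⟨TL, hTL⟩ : ∃ e : ((Fin n → ℝ) × ℝ) ≃L[ℝ] ((Fin n → ℝ) × ℝ),
        (e : ((Fin n → ℝ) × ℝ) →L[ℝ] ((Fin n → ℝ) × ℝ)) = T := by
      refine ⟨(LinearEquiv.ofBijective (T : ((Fin n → ℝ) × ℝ) →ₗ[ℝ] ((Fin n → ℝ) × ℝ))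
        hTbij).toContinuousLinearEquiv, ?_⟩
      apply ContinuousLinearMap.ext
      intro w
      rfl
    have hΦT' : HasFDerivAt Φ
        (TL : ((Fin n → ℝ) × ℝ) →L[ℝ] ((Fin n → ℝ) × ℝ)) (z₀, 0) := by
      rw [hTL]; exact hΦT
    set Ψ := hΦc.contDiffAt.toOpenPartialHomeomorph Φ hΦT' one_ne_zero with hΨdef
    have hΨcoe : ⇑Ψ = Φ := rfl
    have hz₀src : ((z₀, (0:ℝ)) : (Fin n → ℝ) × ℝ) ∈ Ψ.source :=
      hΦc.contDiffAt.mem_toOpenPartialHomeomorph_source hΦT' one_ne_zero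
    -- set where the derivative of Φ is invertible
    set V : Set ((Fin n → ℝ) × ℝ) := {w | (fderiv ℝ Φ w).det ≠ 0} with hVdef
    have hVopen : IsOpen V := by
      have hfC : Continuous fun w => fderiv ℝ Φ w := hΦc.continuous_fderiv one_ne_zero
      have hdetC : Continuous fun w => (fderiv ℝ Φ w).det :=
        ContinuousLinearMap.continuous_det.comp hfC
      exact isOpen_compl_singleton.preimage hdetC
    have hz₀V : ((z₀, (0:ℝ)) : (Fin n → ℝ) × ℝ) ∈ V := by
      have hfd : fderiv ℝ Φ (z₀, 0) = (TL : ((Fin n → ℝ) × ℝ) →L[ℝ] ((Fin n → ℝ) × ℝ)) :=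
        hΦT'.fderiv
      show (fderiv ℝ Φ (z₀, 0)).det ≠ 0
      rw [hfd]
      have : IsUnit (LinearMap.det (TL.toLinearEquiv : ((Fin n → ℝ) × ℝ) →ₗ[ℝ] ((Fin n → ℝ) × ℝ))) :=
        LinearEquiv.isUnit_det' TL.toLinearEquiv
      exact this.ne_zero
    have hWnhds : Ψ.source ∩ V ∈ 𝓝 ((z₀, (0:ℝ)) : (Fin n → ℝ) × ℝ) :=
      Filter.inter_mem (Ψ.open_source.mem_nhds hz₀src) (hVopen.mem_nhds hz₀V)
    obtain ⟨U, v, hUopen, hzU, hvopen, hv0, hUv⟩ := mem_nhds_prod_iff'.1 hWnhds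
    obtain ⟨δ, hδpos, hball⟩ := Metric.isOpen_iff.1 hvopen 0 hv0
    refine ⟨U, hUopen, hzU, δ, hδpos, ?_⟩
    intro ε hε
    have hεv : ε ∈ v := by
      apply hball
      rw [Metric.mem_ball, Real.dist_eq, sub_zero, abs_of_nonneg hε.1]
      exact hε.2
    have hmemK : ∀ z ∈ U, ((z, ε) : (Fin n → ℝ) × ℝ) ∈ Ψ.source ∩ V :=
      fun z hz => hUv ⟨hz, hεv⟩
    have hinj : Set.InjOn (fun z => H (z, ε)) U := by
      intro a ha b hb hab
      have hΦab : Φ (a, ε) = Φ (b, ε) := Prod.ext hab rfl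
      have := Ψ.injOn (hmemK a ha).1 (hmemK b hb).1 (by rw [hΨcoe]; exact hΦab)
      exact (Prod.ext_iff.1 this).1
    have hKopen : IsOpen (U ×ˢ v) := hUopen.prod hvopen
    have hKsub : U ×ˢ v ⊆ Ψ.source := fun w hw => (hUv hw).1
    have hOopen : IsOpen (Φ '' (U ×ˢ v)) := by
      have := Ψ.isOpen_image_of_subset_source hKopen hKsub
      rwa [hΨcoe] at this
    have himg : (fun z => H (z, ε)) '' U = (fun y => ((y, ε) : (Fin n → ℝ) × ℝ)) ⁻¹' (Φ '' (U ×ˢ v)) := by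
      ext y
      constructor
      · rintro ⟨z, hz, rfl⟩
        exact ⟨(z, ε), ⟨hz, hεv⟩, rfl⟩
      · rintro ⟨⟨z, δ'⟩, hw, heq⟩
        have heq' : ((H (z, δ'), δ') : (Fin n → ℝ) × ℝ) = (y, ε) := heq
        have h2 : δ' = ε := (Prod.ext_iff.1 heq').2
        have h1 : H (z, δ') = y := (Prod.ext_iff.1 heq').1
        exact ⟨z, hw.1, by rw [← h1, h2]⟩
    have hopen : IsOpen ((fun z => H (z, ε)) '' U) := by
      rw [himg]
      exact hOopen.preimage (continuous_id.prodMk continuous_const)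
    refine ⟨hinj, hopen, (hHc.comp (contDiff_id.prodMk contDiff_const)).contDiffOn,
      fun y => (Ψ.symm (y, ε)).1, ?_, ?_⟩
    · -- smoothness of the inverse on the image
      rintro y ⟨z, hz, rfl⟩
      apply ContDiffAt.contDiffWithinAt
      have hxsrc := (hmemK z hz).1
      have hxV := (hmemK z hz).2
      obtain ⟨Dxe, hDxe⟩ := clm_equiv_of_det_ne_zero (fderiv ℝ Φ (z, ε)) hxV
      have hΦx : ContDiffAt ℝ 1 Φ (z, ε) := hΦc.contDiffAt
      have hx' : HasFDerivAt Φ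
          (Dxe : ((Fin n → ℝ) × ℝ) →L[ℝ] ((Fin n → ℝ) × ℝ)) (z, ε) := by
        rw [hDxe]; exact (hΦc.differentiable one_ne_zero (z, ε)).hasFDerivAt
      set g : ((Fin n → ℝ) × ℝ) → ((Fin n → ℝ) × ℝ) := hΦx.localInverse hx' one_ne_zero with hgdef
      have hgC : ContDiffAt ℝ 1 g (Φ (z, ε)) := hΦx.to_localInverse hx' one_ne_zero
      have hΦxy : ((H (z, ε), ε) : (Fin n → ℝ) × ℝ) = Φ (z, ε) := rfl
      have hcand : ContDiffAt ℝ 1 (fun w : Fin n → ℝ => (g (w, ε)).1) ((fun z => H (z, ε)) z) := by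
        have h1 : ContDiffAt ℝ 1 (fun w : Fin n → ℝ => ((w, ε) : (Fin n → ℝ) × ℝ)) (H (z, ε)) :=
          (contDiff_id.prodMk contDiff_const).contDiffAt
        have h2 : ContDiffAt ℝ 1 g ((fun w : Fin n → ℝ => ((w, ε) : (Fin n → ℝ) × ℝ)) (H (z, ε))) := by
          rw [show ((fun w : Fin n → ℝ => ((w, ε) : (Fin n → ℝ) × ℝ)) (H (z, ε))) = Φ (z, ε) from rfl]
          exact hgC
        exact contDiff_fst.contDiffAt.comp (H (z, ε)) (h2.comp (H (z, ε)) h1)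
      refine hcand.congr_of_eventuallyEq ?_
      -- eventual equality of the two inverses
      have hc : ContinuousAt (fun w : Fin n → ℝ => ((w, ε) : (Fin n → ℝ) × ℝ)) (H (z, ε)) :=
        (continuous_id.prodMk continuous_const).continuousAt
      have hTgt : ∀ᶠ w' in 𝓝 (Φ (z, ε)), w' ∈ Ψ.target :=
        Ψ.open_target.mem_nhds (Ψ.map_source hxsrc)
      have hgx : g (Φ (z, ε)) = (z, ε) := hΦx.localInverse_apply_image hx' one_ne_zero
      have hgSrc : ∀ᶠ w' in 𝓝 (Φ (z, ε)), g w' ∈ Ψ.source := by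
        have : Ψ.source ∈ 𝓝 (g (Φ (z, ε))) := by
          rw [hgx]; exact Ψ.open_source.mem_nhds hxsrc
        exact hgC.continuousAt.eventually_mem this
      have hrinv : ∀ᶠ w' in 𝓝 (Φ (z, ε)), Φ (g w') = w' :=
        (hΦx.hasStrictFDerivAt' hx' one_ne_zero).eventually_right_inverse
      have hall := hc.eventually (hTgt.and (hgSrc.and hrinv))
      filter_upwards [hall] with w hw
      obtain ⟨hw1, hw2, hw3⟩ := hw
      have hmem : Ψ.symm (w, ε) ∈ Ψ.source := Ψ.map_target hw1
      have hΦsymm : Φ (Ψ.symm (w, ε)) = ((w, ε) : (Fin n → ℝ) × ℝ) := Ψ.right_inv hw1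
      have heq : Ψ.symm (w, ε) = g (w, ε) := by
        apply Ψ.injOn hmem hw2
        rw [hΨcoe, hΦsymm, hw3]
      rw [heq]
    · -- right inverse on U
      intro z hz
      have hsrc := (hmemK z hz).1
      have hlinv : Ψ.symm (Ψ (z, ε)) = ((z, ε) : (Fin n → ℝ) × ℝ) := Ψ.left_inv hsrc
      show (Ψ.symm (H (z, ε), ε)).1 = z
      have : ((H (z, ε), ε) : (Fin n → ℝ) × ℝ) = Ψ (z, ε) := rfl
      rw [this, hlinv]
  · -- reverse direction
    rintro ⟨U, hUopen, hzU, ε₀, hε₀, hprop⟩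
    obtain ⟨hinj, hopen, hcd, Hinv, hHinvC, hHinvEq⟩ := hprop 0 ⟨le_refl 0, hε₀⟩
    have hh0 : ∀ z, H (z, 0) = z + (N z).mulVec (f z) := by
      intro z; rw [hH]; simp
    have hL0 : HasFDerivAt (fun z => H (z, 0)) L z₀ := by
      apply hL.congr_of_eventuallyEq
      exact Filter.Eventually.of_forall hh0
    have hy₀ : H (z₀, 0) ∈ (fun z => H (z, 0)) '' U := ⟨z₀, hzU, rfl⟩
    have hHinvAt : ContDiffAt ℝ 1 Hinv (H (z₀, 0)) :=
      hHinvC.contDiffAt (hopen.mem_nhds hy₀)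
    have hHinvD : HasFDerivAt Hinv (fderiv ℝ Hinv (H (z₀, 0))) (H (z₀, 0)) :=
      (hHinvAt.differentiableAt one_ne_zero).hasFDerivAt
    have hcompD : HasFDerivAt (fun z => Hinv (H (z, 0)))
        ((fderiv ℝ Hinv (H (z₀, 0))).comp L) z₀ := hHinvD.comp z₀ hL0
    have hid : HasFDerivAt (fun z : Fin n → ℝ => Hinv (H (z, 0)))
        (ContinuousLinearMap.id ℝ (Fin n → ℝ)) z₀ := by
      apply (hasFDerivAt_id z₀).congr_of_eventuallyEq
      filter_upwards [hUopen.mem_nhds hzU] with z hz using hHinvEq z hz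
    have huniq : (fderiv ℝ Hinv (H (z₀, 0))).comp L = ContinuousLinearMap.id ℝ (Fin n → ℝ) :=
      hcompD.unique hid
    have hdet1 : LinearMap.det ((fderiv ℝ Hinv (H (z₀, 0)) : (Fin n → ℝ) →L[ℝ] (Fin n → ℝ)) :
        (Fin n → ℝ) →ₗ[ℝ] (Fin n → ℝ)) * LinearMap.det (L : (Fin n → ℝ) →ₗ[ℝ] (Fin n → ℝ)) = 1 := by
      rw [← LinearMap.det_comp, ← ContinuousLinearMap.toLinearMap_comp, huniq]
      simp
    rw [← hdetL]
    exact right_ne_zero_of_mul (hdet1 ▸ (one_ne_zero (α := ℝ)))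
end

section
/- Let n ≥ 1 and let B be an n×n real matrix, with complex spectrum understood via the entrywise embedding ℝ → ℂ. Then the following are equivalent: (i) every eigenvalue λ ∈ spectrum ℂ B satisfies Re λ ≠ 0; (ii) there exist constants c > 0 and ε₀ > 0 such that for every ε with 0 < ε < ε₀, every eigenvalue μ ∈ spectrum ℂ (I_n + ε • B) satisfies | |μ| − 1 | > c·ε. -/
set_option maxHeartbeats 1000000

open Complex

lemma spec_one_add_smul (n : ℕ) (B : Matrix (Fin n) (Fin n) ℝ) {ε : ℝ} (hε : ε ≠ 0) :
    spectrum ℂ (((1 : Matrix (Fin n) (Fin n) ℝ) + ε • B).map Complex.ofReal)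
      = (fun lam => 1 + (ε : ℂ) * lam) '' spectrum ℂ (B.map Complex.ofReal) := by
  have hmap : (((1 : Matrix (Fin n) (Fin n) ℝ) + ε • B).map Complex.ofReal)
      = algebraMap ℂ (Matrix (Fin n) (Fin n) ℂ) 1
        + (Units.mk0 (ε : ℂ) (by exact_mod_cast hε) : ℂˣ) • (B.map Complex.ofReal) := by
    ext i j
    simp [Matrix.map_apply, Matrix.one_apply, Matrix.algebraMap_matrix_apply,
      Matrix.add_apply, Matrix.smul_apply]
    split <;> push_cast <;> ring
  rw [hmap, ← spectrum.singleton_add_eq, spectrum.unit_smul_eq_smul]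
  ext μ
  constructor
  · rintro ⟨x, ⟨rfl⟩, y, ⟨lam, hlam, rfl⟩, rfl⟩
    exact ⟨lam, hlam, rfl⟩
  · rintro ⟨lam, hlam, rfl⟩
    exact ⟨1, rfl, (ε : ℂ) * lam, ⟨lam, hlam, rfl⟩, rfl⟩

/-- Quantitative hyperbolicity: all complex eigenvalues of the real matrix `B`
have nonzero real part if and only if there are `c > 0` and `ε₀ > 0` such that
for all `0 < ε < ε₀` every eigenvalue `μ` of `I + ε • B` satisfies
`| |μ| − 1 | > c·ε`. -/
theorem hyperbolicity_iff_multipliers_off_unit_circle (n : ℕ) (hn : 1 ≤ n)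
    (B : Matrix (Fin n) (Fin n) ℝ) :
    (∀ lam ∈ spectrum ℂ (B.map Complex.ofReal), lam.re ≠ 0) ↔
      ∃ c > (0 : ℝ), ∃ ε₀ > (0 : ℝ), ∀ ε : ℝ, 0 < ε → ε < ε₀ →
        ∀ μ ∈ spectrum ℂ
            (((1 : Matrix (Fin n) (Fin n) ℝ) + ε • B).map Complex.ofReal),
          c * ε < |‖μ‖ - 1| := by
  set B' := B.map Complex.ofReal with hB'
  have hfin : (spectrum ℂ B').Finite := Matrix.finite_spectrum B'
  constructor
  · intro hre
    -- set up the constants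
    haveI : Nonempty (Fin n) := ⟨⟨0, hn⟩⟩
    have hne : (spectrum ℂ B').Nonempty :=
      spectrum.nonempty_of_isAlgClosed_of_finiteDimensional ℂ B'
    obtain ⟨r, hrmem, hrmin⟩ := Set.Finite.exists_minimalFor (fun lam => |lam.re|) _ hfin hne
    have hr : 0 < |r.re| := abs_pos.mpr (hre r hrmem)
    obtain ⟨R, hRmem, hRmax⟩ := Set.Finite.exists_maximalFor (fun lam => ‖lam‖) _ hfin hne
    set a := |r.re| with ha
    set Rb := ‖R‖ + 1 with hRb
    have hRb0 : 0 < Rb := by positivity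
    refine ⟨a / 4, by positivity, min (1 / Rb) (a / Rb ^ 2), lt_min (by positivity) (by positivity),
      ?_⟩
    intro ε hε0 hε1 μ hμ
    rw [spec_one_add_smul n B hε0.ne'] at hμ
    obtain ⟨lam, hlam, rfl⟩ := hμ
    have hlam_re : a ≤ |lam.re| := by
      by_contra h
      push_neg at h
      have := hrmin hlam h.le
      linarith
    have hlam_abs : ‖lam‖ < Rb := by
      have := hRmax hlam
      rcases le_or_gt (‖lam‖) (‖R‖) with h | h
      · linarith
      · linarith [this h.le]
    set μ := 1 + (ε : ℂ) * lam with hμdef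
    have habs_sq : (‖μ‖) ^ 2 = 1 + 2 * ε * lam.re + ε ^ 2 * (‖lam‖) ^ 2 := by
      rw [← Complex.normSq_eq_norm_sq, Complex.normSq_apply, ← Complex.normSq_eq_norm_sq,
        Complex.normSq_apply]
      simp [hμdef, Complex.add_re, Complex.add_im, Complex.mul_re, Complex.mul_im]
      ring
    have hεRb : ε * Rb < 1 := by
      have : ε < 1 / Rb := lt_of_lt_of_le hε1 (min_le_left _ _)
      calc ε * Rb < (1 / Rb) * Rb := by nlinarith
        _ = 1 := by field_simp
    have habs_lt : ‖μ‖ < 2 := by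
      calc ‖μ‖ ≤ ‖1‖ + ‖(ε : ℂ) * lam‖ := norm_add_le _ _
        _ = 1 + ε * ‖lam‖ := by
            simp [map_mul, Complex.norm_real, abs_of_pos hε0]
        _ < 1 + 1 := by nlinarith
        _ = 2 := by norm_num
    have hεa : ε * (‖lam‖) ^ 2 < a := by
      have h2 : ε < a / Rb ^ 2 := lt_of_lt_of_le hε1 (min_le_right _ _)
      have : (‖lam‖) ^ 2 < Rb ^ 2 := by nlinarith [norm_nonneg lam]
      calc ε * (‖lam‖) ^ 2 ≤ ε * Rb ^ 2 := by nlinarith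
        _ < (a / Rb ^ 2) * Rb ^ 2 := mul_lt_mul_of_pos_right h2 (by positivity)
        _ = a := by field_simp
    have habs_nonneg : 0 ≤ ‖μ‖ := norm_nonneg μ
    -- key: |(abs μ)^2 - 1| ≥ ε * a
    have hkey : ε * a < |(‖μ‖) ^ 2 - 1| := by
      rcases abs_cases lam.re with ⟨heq, hpos⟩ | ⟨heq, hneg⟩
      · -- lam.re > 0, so a ≤ lam.re
        have : a ≤ lam.re := heq ▸ hlam_re
        have h1 : (‖μ‖) ^ 2 - 1 = 2 * ε * lam.re + ε ^ 2 * (‖lam‖) ^ 2 := by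
          rw [habs_sq]; ring
        rw [abs_of_pos (by rw [h1]; nlinarith [sq_nonneg (‖lam‖)]), h1]
        nlinarith [sq_nonneg (‖lam‖)]
      · -- lam.re < 0, so lam.re ≤ -a
        have : lam.re ≤ -a := by linarith [hlam_re, heq ▸ hlam_re]
        have h1 : 1 - (‖μ‖) ^ 2 = -(2 * ε * lam.re) - ε ^ 2 * (‖lam‖) ^ 2 := by
          rw [habs_sq]; ring
        have hεa' : ε * (‖lam‖) ^ 2 < a := hεa
        have hpos' : ε * a < 1 - (‖μ‖) ^ 2 := by rw [h1]; nlinarith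
        rw [abs_sub_comm, abs_of_pos (by linarith [mul_pos hε0 hr])]
        linarith [mul_pos hε0 hr]
    -- now |abs μ - 1| * (abs μ + 1) = |(abs μ)^2 - 1| and abs μ + 1 < 3
    have hfactor : |(‖μ‖) ^ 2 - 1| = |‖μ‖ - 1| * (‖μ‖ + 1) := by
      rw [← abs_of_pos (show (0:ℝ) < ‖μ‖ + 1 by linarith), ← abs_mul]
      congr 1; ring
    have h3 : |(‖μ‖) ^ 2 - 1| < |‖μ‖ - 1| * 3 := by
      rw [hfactor]
      have h4 : (0:ℝ) < |‖μ‖ - 1| := by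
        rcases eq_or_ne (‖μ‖) 1 with h | h
        · exfalso; rw [h] at hkey; simp at hkey; nlinarith
        · exact abs_pos.mpr (sub_ne_zero.mpr h)
      nlinarith
    have hεapos : 0 < ε * a := mul_pos hε0 hr
    calc a / 4 * ε < ε * a / 3 := by nlinarith
      _ < |‖μ‖ - 1| := by linarith
  · -- reverse direction
    rintro ⟨c, hc, ε₀, hε₀, H⟩ lam hlam hre
    -- take ε small
    set M := ‖lam‖ with hM
    obtain ⟨ε, hε0, hε1, hε2⟩ : ∃ ε : ℝ, 0 < ε ∧ ε < ε₀ ∧ ε * (M ^ 2 + 1) < c := by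
      refine ⟨min (ε₀ / 2) (c / (2 * (M ^ 2 + 1))), lt_min (by positivity) (by positivity),
        lt_of_le_of_lt (min_le_left _ _) (by linarith), ?_⟩
      have h1 : min (ε₀ / 2) (c / (2 * (M ^ 2 + 1))) ≤ c / (2 * (M ^ 2 + 1)) := min_le_right _ _
      have h2 : (0:ℝ) < M ^ 2 + 1 := by positivity
      calc min (ε₀ / 2) (c / (2 * (M ^ 2 + 1))) * (M ^ 2 + 1)
          ≤ (c / (2 * (M ^ 2 + 1))) * (M ^ 2 + 1) := by nlinarith [lt_min (show (0:ℝ) < ε₀/2 by positivity) (show (0:ℝ) < c / (2 * (M ^ 2 + 1)) by positivity)]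
        _ = c / 2 := by field_simp
        _ < c := by linarith
    have hμmem : (1 + (ε : ℂ) * lam) ∈ spectrum ℂ
        (((1 : Matrix (Fin n) (Fin n) ℝ) + ε • B).map Complex.ofReal) := by
      rw [spec_one_add_smul n B hε0.ne']
      exact ⟨lam, hlam, rfl⟩
    have := H ε hε0 hε1 _ hμmem
    set μ := 1 + (ε : ℂ) * lam with hμdef
    have habs_sq : (‖μ‖) ^ 2 = 1 + ε ^ 2 * M ^ 2 := by
      rw [← Complex.normSq_eq_norm_sq, Complex.normSq_apply, hM, ← Complex.normSq_eq_norm_sq,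
        Complex.normSq_apply]
      simp [hμdef, Complex.add_re, Complex.add_im, Complex.mul_re, Complex.mul_im, hre]
      ring
    have habs_ge : 1 ≤ ‖μ‖ := by
      nlinarith [norm_nonneg μ, sq_nonneg (ε * M)]
    have hub : |‖μ‖ - 1| ≤ ε ^ 2 * M ^ 2 := by
      rw [_root_.abs_of_nonneg (sub_nonneg.mpr habs_ge)]
      nlinarith [norm_nonneg μ]
    have : c * ε < ε ^ 2 * M ^ 2 := lt_of_lt_of_le this hub
    nlinarith [sq_nonneg M]
end

section
/- Let k ∈ ℕ and a ∈ ℝᵏ. For every quadratic form Q on ℝᵏ × ℝ there exists a unique quadratic form F on ℝᵏ × ℝ such that ∫₀¹ F(x + (τ·u)·a, u) dτ = Q(x, u) for all x ∈ ℝᵏ and u ∈ ℝ. Moreover, if Q(x, 0) = 0 for all x ∈ ℝᵏ, then F(x, 0) = 0 for all x ∈ ℝᵏ, and for every x ∈ ℝᵏ the polar forms agree: polar F ((x,0), (0,1)) = polar Q ((x,0), (0,1)). -/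
private lemma qm_poly_int (c0 c1 c2 : ℝ) :
    (∫ τ in (0:ℝ)..1, (c0 + c1 * τ + c2 * τ ^ 2)) = c0 + c1 / 2 + c2 / 3 := by
  rw [intervalIntegral.integral_add (Continuous.intervalIntegrable (by continuity) 0 1)
      (Continuous.intervalIntegrable (by continuity) 0 1),
    intervalIntegral.integral_add (Continuous.intervalIntegrable (by continuity) 0 1)
      (Continuous.intervalIntegrable (by continuity) 0 1),
    intervalIntegral.integral_const_mul, intervalIntegral.integral_const_mul]
  simp [integral_pow, integral_id]
  ring

private lemma qm_expand {k : ℕ} (F : QuadraticForm ℝ ((Fin k → ℝ) × ℝ))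
    (x a : Fin k → ℝ) (u c : ℝ) :
    F (x + c • a, u) = F (x, u) + c * QuadraticMap.polar (⇑F) (x, u) (a, 0) + c^2 * F (a, 0) := by
  have h : ((x + c • a, u) : (Fin k → ℝ) × ℝ) = (x, u) + c • ((a, 0) : (Fin k → ℝ) × ℝ) := by
    simp [Prod.ext_iff]
  rw [h, QuadraticMap.map_add F (x, u) (c • ((a, 0) : (Fin k → ℝ) × ℝ)),
    QuadraticMap.polar_smul_right, QuadraticMap.map_smul]
  simp [smul_eq_mul]; ring

private lemma qm_integral {k : ℕ} (a : Fin k → ℝ) (F : QuadraticForm ℝ ((Fin k → ℝ) × ℝ))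
    (x : Fin k → ℝ) (u : ℝ) :
    (∫ τ in (0:ℝ)..1, F (x + (τ * u) • a, u)) =
      F (x + (u / 2) • a, u) + (u ^ 2 / 12) * F (a, 0) := by
  have h : ∀ τ : ℝ, F (x + (τ * u) • a, u) =
      F (x, u) + (u * QuadraticMap.polar (⇑F) (x, u) (a, 0)) * τ + (u^2 * F (a, 0)) * τ^2 := by
    intro τ
    rw [qm_expand]
    ring
  simp_rw [h]
  rw [qm_poly_int, qm_expand]
  ring

open scoped intervalIntegral in
/-- Quadratic-order matching: for every quadratic form `Q` on `ℝᵏ × ℝ` there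
is a unique quadratic form `F` with `∫₀¹ F(x + (τ·u)·a, u) dτ = Q(x,u)`;
moreover if `Q(x,0) = 0` for all `x` then `F(x,0) = 0` for all `x` and the
polar forms `polar F ((x,0),(0,1))` and `polar Q ((x,0),(0,1))` agree. -/
theorem quadratic_matching (k : ℕ) (a : Fin k → ℝ)
    (Q : QuadraticForm ℝ ((Fin k → ℝ) × ℝ)) :
    (∃! F : QuadraticForm ℝ ((Fin k → ℝ) × ℝ),
      ∀ (x : Fin k → ℝ) (u : ℝ),
        (∫ τ in (0:ℝ)..1, F (x + (τ * u) • a, u)) = Q (x, u)) ∧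
    (∀ F : QuadraticForm ℝ ((Fin k → ℝ) × ℝ),
      (∀ (x : Fin k → ℝ) (u : ℝ),
          (∫ τ in (0:ℝ)..1, F (x + (τ * u) • a, u)) = Q (x, u)) →
      (∀ x : Fin k → ℝ, Q (x, 0) = 0) →
      (∀ x : Fin k → ℝ, F (x, 0) = 0) ∧
      ∀ x : Fin k → ℝ,
        QuadraticMap.polar (⇑F) (x, 0) (0, 1) =
          QuadraticMap.polar (⇑Q) (x, 0) (0, 1)) := by
  constructor
  · -- existence and uniqueness
    set B : ((Fin k → ℝ) × ℝ) →ₗ[ℝ] ((Fin k → ℝ) × ℝ) :=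
      (LinearMap.fst ℝ (Fin k → ℝ) ℝ -
        (1/2 : ℝ) • (LinearMap.snd ℝ (Fin k → ℝ) ℝ).smulRight a).prod
        (LinearMap.snd ℝ (Fin k → ℝ) ℝ) with hB
    set F0 : QuadraticForm ℝ ((Fin k → ℝ) × ℝ) :=
      Q.comp B - (Q (a, 0) / 12) •
        (QuadraticMap.sq.comp (LinearMap.snd ℝ (Fin k → ℝ) ℝ)) with hF0def
    have hF0 : ∀ (x : Fin k → ℝ) (u : ℝ),
        F0 (x, u) = Q (x - (u / 2) • a, u) - (Q (a, 0) / 12) * u ^ 2 := by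
      intro x u
      have hBxu : B (x, u) = (x - (u / 2) • a, u) := by
        simp only [hB, LinearMap.prod_apply, Function.prod, LinearMap.sub_apply,
          LinearMap.fst_apply, LinearMap.smul_apply, LinearMap.smulRight_apply,
          LinearMap.snd_apply, Prod.mk.injEq, and_true, smul_smul]
        rw [show (1/2 : ℝ) * u = u / 2 by ring]
      simp only [hF0def, QuadraticMap.sub_apply, QuadraticMap.comp_apply, hBxu,
        QuadraticMap.smul_apply, QuadraticMap.sq_apply, LinearMap.snd_apply, smul_eq_mul]
      ring
    refine ⟨F0, ?_, ?_⟩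
    · intro x u
      rw [qm_integral, hF0]
      have h1 : x + (u / 2) • a - (u / 2) • a = x := add_sub_cancel_right x _
      rw [h1]
      have h2 : F0 (a, 0) = Q (a, 0) := by
        rw [hF0]
        simp
      rw [h2]
      ring
    · intro G hG
      have hGA : ∀ (x : Fin k → ℝ) (u : ℝ),
          G (x + (u / 2) • a, u) + (u ^ 2 / 12) * G (a, 0) = Q (x, u) := by
        intro x u
        rw [← qm_integral]
        exact hG x u
      have hGa0 : G (a, 0) = Q (a, 0) := by
        have := hGA a 0
        simpa using this
      apply QuadraticMap.ext
      rintro ⟨x, u⟩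
      have := hGA (x - (u / 2) • a) u
      rw [sub_add_cancel, hGa0] at this
      rw [hF0 x u]
      linarith
  · -- moreover
    intro F hF hQ0
    have hA : ∀ (x : Fin k → ℝ) (u : ℝ),
        F (x + (u / 2) • a, u) + (u ^ 2 / 12) * F (a, 0) = Q (x, u) := by
      intro x u
      rw [← qm_integral]
      exact hF x u
    have h0 : ∀ x : Fin k → ℝ, F (x, 0) = 0 := by
      intro x
      have := hA x 0
      simpa [hQ0 x] using this
    refine ⟨h0, fun x => ?_⟩
    have hFa0 : F (a, 0) = 0 := h0 a
    have hF1 : ∀ y : Fin k → ℝ, F (y, 1) = Q (y - ((1:ℝ)/2) • a, 1) := by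
      intro y
      have := hA (y - ((1:ℝ)/2) • a) 1
      rw [sub_add_cancel] at this
      linarith
    have hsum : ∀ y : Fin k → ℝ, ((y, 0) : (Fin k → ℝ) × ℝ) + (0, 1) = (y, 1) := by
      intro y; simp [Prod.ext_iff]
    have hpolF : QuadraticMap.polar (⇑F) (x, 0) (0, 1) = F (x, 1) - F (x, 0) - F (0, 1) := by
      simp only [QuadraticMap.polar, hsum x]
    have hpolQ : QuadraticMap.polar (⇑Q) (x, 0) (0, 1) = Q (x, 1) - Q (x, 0) - Q (0, 1) := by
      simp only [QuadraticMap.polar, hsum x]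
    have hpol0 : QuadraticMap.polar (⇑Q) (x, 0) (a, 0) = 0 := by
      have hxa : ((x, 0) : (Fin k → ℝ) × ℝ) + (a, 0) = (x + a, 0) := by simp [Prod.ext_iff]
      simp only [QuadraticMap.polar, hxa, hQ0]
      ring
    have hadd := QuadraticMap.polar_add_left (Q := Q) ((x, 0) : (Fin k → ℝ) × ℝ) (0, 1) (a, 0)
    rw [hsum x] at hadd
    have eq1 := qm_expand Q x a 1 (-(1/2))
    have eq1' : x + (-(1/2) : ℝ) • a = x - ((1:ℝ)/2) • a := by
      rw [neg_smul, ← sub_eq_add_neg]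
    rw [eq1'] at eq1
    have eq2 := qm_expand Q 0 a 1 (-(1/2))
    have eq2' : (0 : Fin k → ℝ) + (-(1/2) : ℝ) • a = 0 - ((1:ℝ)/2) • a := by
      rw [neg_smul, ← sub_eq_add_neg]
    rw [eq2'] at eq2
    rw [show ((-(1/2) : ℝ))^2 = 1/4 by norm_num] at eq1 eq2
    rw [hpolF, hpolQ, hF1 x, hF1 0, h0 x]
    linarith [hQ0 a, hQ0 x]
end
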